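/- Let n ≥ 1, let x_1 < ⋯ < x_n be real numbers, m_1, …, m_n real, and set l_k = x_{k+1} − x_k. Define 3×3 matrices over the polynomial ring ℝ[z]: L_k = [[1, l_k, l_k²/2], [0, 1, l_k], [0, 0, 1]] and G_k(z) = [[1, 0, 0], [0, 1, 0], [−2 m_k z, 0, 1]], and let (C(z), B(z), A(z))ᵗ = G_n(z) L_{n−1} G_{n−1}(z) ⋯ L_1 G_1(z) (1, 0, 0)ᵗ. Then A(z) = 2 Σ_{k=1}^n (−z)^k M_k, where M_k = Σ_{I} (∏_{i ∈ I} m_i) (∏_{j=1}^{k−1} (x_{i_j} − x_{i_{j+1}})²), the sum running over all k-element subsets I = {i_1 < ⋯ < i_k} of {1, …, n}, with the inner product interpreted as 1 when k = 1. -/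

import Mathlib

open Polynomial Matrix

/-- The transfer matrix `L_k` of the discrete cubic string (with gap `l`). -/
noncomputable def Lmat (l : ℝ) : Matrix (Fin 3) (Fin 3) (Polynomial ℝ) :=
  !![1, Polynomial.C l, Polynomial.C (l ^ 2 / 2);
     0, 1, Polynomial.C l;
     0, 0, 1]

/-- The transfer matrix `G_k(z)` of the discrete cubic string (with mass `m`). -/
noncomputable def Gmat (m : ℝ) : Matrix (Fin 3) (Fin 3) (Polynomial ℝ) :=
  !![1, 0, 0;
     0, 1, 0;
     Polynomial.C (-2 * m) * Polynomial.X, 0, 1]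

/-- The transition matrix `S(z) = G_n(z) L_{n−1} G_{n−1}(z) ⋯ L_1 G_1(z)` of the
discrete cubic string with masses `m 1, …, m n` and gaps `l 1, …, l (n−1)`. -/
noncomputable def transMat (m l : ℕ → ℝ) : ℕ → Matrix (Fin 3) (Fin 3) (Polynomial ℝ)
  | 0 => 1
  | 1 => Gmat (m 1)
  | (k + 2) => Gmat (m (k + 2)) * Lmat (l (k + 1)) * transMat m l (k + 1)


noncomputable section

def incr (n k : ℕ) : Finset (Fin k → Fin n) :=
  Finset.univ.filter fun σ => ∀ a b : Fin k, a < b → σ a < σ b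
@[simp] lemma mem_incr {n k : ℕ} {σ : Fin k → Fin n} :
    σ ∈ incr n k ↔ ∀ a b : Fin k, a < b → σ a < σ b := by
  simp [incr]

lemma top_of_mem {n k : ℕ} {σ : Fin (k+1) → Fin (n+1)}
    (hm : ∀ a b : Fin (k+1), a < b → σ a < σ b)
    (h2 : ¬ ∀ j, σ j ≠ Fin.last n) : σ (Fin.last k) = Fin.last n := by
  push_neg at h2
  obtain ⟨j0, hj0⟩ := h2
  rcases eq_or_lt_of_le (Fin.le_last j0) with h | h
  · rw [← h]; exact hj0
  · have := hm j0 (Fin.last k) h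
    rw [hj0] at this
    exact absurd (this.trans_le (Fin.le_last _)) (lt_irrefl _)

lemma sum_incr_succ {M : Type*} [AddCommMonoid M] (n k : ℕ)
    (f : (Fin (k + 1) → Fin (n + 1)) → M) :
    ∑ σ ∈ incr (n + 1) (k + 1), f σ
      = (∑ σ ∈ incr n (k + 1), f (fun j => (σ j).castSucc))
        + ∑ τ ∈ incr n k, f (Fin.snoc (fun j => (τ j).castSucc) (Fin.last n)) := by
  rw [← Finset.sum_filter_add_sum_filter_not (incr (n+1) (k+1))
    (fun σ => ∀ j, σ j ≠ Fin.last n) f]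
  congr 1
  · refine Finset.sum_bij' (fun σ hσ => fun j => (σ j).castLT ?_)
      (fun τ _ => fun j => (τ j).castSucc) ?_ ?_ ?_ ?_ ?_
    · have hσ' := (Finset.mem_filter.mp hσ).2 j
      have hle : (σ j : ℕ) ≤ n := Nat.lt_succ_iff.mp (σ j).isLt
      rcases lt_or_eq_of_le hle with h | h
      · exact h
      · exact absurd (Fin.ext h) hσ'
    · intro σ hσ
      rw [mem_incr]
      intro a b hab
      have hm := (Finset.mem_filter.mp hσ).1
      rw [mem_incr] at hm
      exact hm a b hab
    · intro τ hτ
      rw [Finset.mem_filter]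
      rw [mem_incr] at hτ ⊢
      refine ⟨fun a b hab => by simpa [Fin.castSucc_lt_castSucc_iff] using hτ a b hab, ?_⟩
      intro j h
      exact absurd h (Fin.castSucc_lt_last (τ j)).ne
    · intro σ hσ; funext j; exact rfl
    · intro τ hτ; funext j; exact rfl
    · intro σ hσ; congr 1
  · refine Finset.sum_bij' (fun σ hσ => fun j => (σ j.castSucc).castLT ?_)
      (fun τ _ => Fin.snoc (fun j => (τ j).castSucc) (Fin.last n)) ?_ ?_ ?_ ?_ ?_
    · have hm := (Finset.mem_filter.mp hσ).1
      rw [mem_incr] at hm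
      have htop := top_of_mem hm (Finset.mem_filter.mp hσ).2
      have : σ j.castSucc < Fin.last n := htop ▸ hm j.castSucc (Fin.last k) (Fin.castSucc_lt_last j)
      exact this
    · intro σ hσ
      rw [mem_incr]
      intro a b hab
      have hm := (Finset.mem_filter.mp hσ).1
      rw [mem_incr] at hm
      exact hm a.castSucc b.castSucc (by simpa [Fin.castSucc_lt_castSucc_iff] using hab)
    · intro τ hτ
      rw [mem_incr] at hτ
      rw [Finset.mem_filter, mem_incr]
      constructor
      · intro a b hab
        induction b using Fin.lastCases with
        | last =>
          induction a using Fin.lastCases with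
          | last => exact absurd hab (lt_irrefl _)
          | cast a' =>
            simp only [Fin.snoc_castSucc, Fin.snoc_last]
            exact Fin.castSucc_lt_last _
        | cast b' =>
          induction a using Fin.lastCases with
          | last => exact absurd (hab.trans_le (Fin.le_last _)) (lt_irrefl _)
          | cast a' =>
            simp only [Fin.snoc_castSucc]
            rw [Fin.castSucc_lt_castSucc_iff] at hab
            rw [Fin.castSucc_lt_castSucc_iff]
            exact hτ a' b' hab
      · intro h
        have := h (Fin.last k)
        simp only [Fin.snoc_last] at this
        exact this rfl
    · intro σ hσ
      have hm := (Finset.mem_filter.mp hσ).1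
      rw [mem_incr] at hm
      have htop := top_of_mem hm (Finset.mem_filter.mp hσ).2
      funext j
      induction j using Fin.lastCases with
      | last => simp only [Fin.snoc_last]; rw [htop]
      | cast i => simp only [Fin.snoc_castSucc]; exact rfl
    · intro τ hτ
      funext j
      simp only [Fin.snoc_castSucc]
      exact rfl
    · intro σ hσ
      have hm := (Finset.mem_filter.mp hσ).1
      rw [mem_incr] at hm
      have htop := top_of_mem hm (Finset.mem_filter.mp hσ).2
      congr 1
      funext j
      induction j using Fin.lastCases with
      | last => simp only [Fin.snoc_last]; rw [htop]
      | cast i => simp only [Fin.snoc_castSucc]; exact rfl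

variable (x m : ℕ → ℝ)

def wA {n k : ℕ} (σ : Fin (k + 1) → Fin n) : ℝ :=
  (∏ j, m ((σ j : ℕ) + 1)) *
    ∏ j : Fin k, (x ((σ j.castSucc : ℕ) + 1) - x ((σ j.succ : ℕ) + 1)) ^ 2

lemma wA_cast {n k : ℕ} (σ : Fin (k + 1) → Fin n) :
    wA x m (fun j => (σ j).castSucc) = wA x m σ := by
  simp [wA]

lemma wA_snoc {n k : ℕ} (τ : Fin (k + 1) → Fin n) :
    wA x m (Fin.snoc (fun j => (τ j).castSucc) (Fin.last n) : Fin (k + 1 + 1) → Fin (n + 1))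
      = m (n + 1) * (wA x m τ * (x (n + 1) - x ((τ (Fin.last k) : ℕ) + 1)) ^ 2) := by
  simp [wA, Fin.prod_univ_castSucc, Fin.snoc_castSucc, Fin.snoc_last, Fin.succ_castSucc,
    Fin.succ_last, -Fin.castSucc_succ]
  ring

lemma wA_snoc_zero (n : ℕ) (e : Fin 0 → Fin n) :
    wA x m (Fin.snoc (fun j => (e j).castSucc) (Fin.last n) : Fin 1 → Fin (n + 1))
      = m (n + 1) := by
  rw [wA, Fin.prod_univ_one, Fin.prod_univ_zero, mul_one,
    show (0 : Fin 1) = Fin.last 0 from rfl, Fin.snoc_last, Fin.val_last]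

def MA (n k : ℕ) : ℝ := ∑ σ ∈ incr n (k + 1), wA x m σ
def MB (n k : ℕ) (p : ℝ) : ℝ :=
  ∑ σ ∈ incr n (k + 1), wA x m σ * (p - x ((σ (Fin.last k) : ℕ) + 1))
def MC (n k : ℕ) (p : ℝ) : ℝ :=
  ∑ σ ∈ incr n (k + 1), wA x m σ * (p - x ((σ (Fin.last k) : ℕ) + 1)) ^ 2

lemma incr_eq_empty (n : ℕ) : incr n (n + 1) = ∅ := by
  rw [Finset.eq_empty_iff_forall_notMem]
  intro σ hσ
  rw [mem_incr] at hσ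
  have hsm : StrictMono σ := fun a b hab => hσ a b hab
  have := Fintype.card_le_of_injective σ hsm.injective
  simp at this

lemma MA_top (n : ℕ) : MA x m n n = 0 := by rw [MA, incr_eq_empty, Finset.sum_empty]
lemma MB_top (n : ℕ) (p : ℝ) : MB x m n n p = 0 := by rw [MB, incr_eq_empty, Finset.sum_empty]
lemma MC_top (n : ℕ) (p : ℝ) : MC x m n n p = 0 := by rw [MC, incr_eq_empty, Finset.sum_empty]

lemma MB_shift (n k : ℕ) (p q : ℝ) :
    MB x m n k q = MB x m n k p + (q - p) * MA x m n k := by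
  rw [MB, MB, MA, Finset.mul_sum, ← Finset.sum_add_distrib]
  exact Finset.sum_congr rfl fun σ _ => by ring

lemma MC_shift (n k : ℕ) (p q : ℝ) :
    MC x m n k q = MC x m n k p + 2 * (q - p) * MB x m n k p + (q - p) ^ 2 * MA x m n k := by
  rw [MC, MC, MB, MA, Finset.mul_sum, Finset.mul_sum, ← Finset.sum_add_distrib,
    ← Finset.sum_add_distrib]
  exact Finset.sum_congr rfl fun σ _ => by ring

lemma incr_zero_eq (n : ℕ) : incr n 0 = (Finset.univ : Finset (Fin 0 → Fin n)) := by
  ext σ; simp [incr]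

lemma sum_incr_zero (n : ℕ) (f : (Fin 0 → Fin n) → ℝ) :
    ∑ τ ∈ incr n 0, f τ = f finZeroElim := by
  rw [incr_zero_eq, Finset.univ_unique, Finset.sum_singleton]
  congr

lemma MA_succ (n k : ℕ) :
    MA x m (n + 1) (k + 1) = MA x m n (k + 1) + m (n + 1) * MC x m n k (x (n + 1)) := by
  have h1 : (∑ σ ∈ incr n (k + 1 + 1), wA x m fun j => (σ j).castSucc) = MA x m n (k + 1) :=
    Finset.sum_congr rfl fun σ _ => wA_cast x m σ
  have h2 : (∑ τ ∈ incr n (k + 1),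
      wA x m (Fin.snoc (fun j => (τ j).castSucc) (Fin.last n)))
        = m (n + 1) * MC x m n k (x (n + 1)) := by
    rw [MC, Finset.mul_sum]
    exact Finset.sum_congr rfl fun τ _ => wA_snoc x m τ
  rw [MA, sum_incr_succ, h1, h2]

lemma MA_succ_zero (n : ℕ) : MA x m (n + 1) 0 = MA x m n 0 + m (n + 1) := by
  have h1 : (∑ σ ∈ incr n (0 + 1), wA x m fun j => (σ j).castSucc) = MA x m n 0 :=
    Finset.sum_congr rfl fun σ _ => wA_cast x m σ
  have h2 : (∑ τ ∈ incr n 0,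
      wA x m (Fin.snoc (fun j => (τ j).castSucc) (Fin.last n))) = m (n + 1) := by
    rw [sum_incr_zero]
    exact wA_snoc_zero x m n _
  rw [MA, sum_incr_succ, h1, h2]

lemma MB_succ (n k : ℕ) :
    MB x m (n + 1) k (x (n + 1)) = MB x m n k (x (n + 1)) := by
  rw [MB, MB, sum_incr_succ n k
    (fun σ => wA x m σ * (x (n + 1) - x ((σ (Fin.last k) : ℕ) + 1)))]
  have h2 : (∑ τ ∈ incr n k,
      (fun σ : Fin (k + 1) → Fin (n + 1) => wA x m σ * (x (n + 1) - x ((σ (Fin.last k) : ℕ) + 1)))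
        (Fin.snoc (fun j => (τ j).castSucc) (Fin.last n))) = 0 := by
    refine Finset.sum_eq_zero fun τ _ => ?_
    simp [Fin.snoc_last]
  rw [h2, add_zero]
  exact Finset.sum_congr rfl fun σ _ => by rw [wA_cast]; simp

lemma MC_succ (n k : ℕ) :
    MC x m (n + 1) k (x (n + 1)) = MC x m n k (x (n + 1)) := by
  rw [MC, MC, sum_incr_succ n k
    (fun σ => wA x m σ * (x (n + 1) - x ((σ (Fin.last k) : ℕ) + 1)) ^ 2)]
  have h2 : (∑ τ ∈ incr n k,
      (fun σ : Fin (k + 1) → Fin (n + 1) =>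
        wA x m σ * (x (n + 1) - x ((σ (Fin.last k) : ℕ) + 1)) ^ 2)
        (Fin.snoc (fun j => (τ j).castSucc) (Fin.last n))) = 0 := by
    refine Finset.sum_eq_zero fun τ _ => ?_
    simp [Fin.snoc_last]
  rw [h2, add_zero]
  exact Finset.sum_congr rfl fun σ _ => by rw [wA_cast]; simp

def PA (n : ℕ) : Polynomial ℝ :=
  2 * ∑ k ∈ Finset.range n, (-X) ^ (k + 1) * C (MA x m n k)
def PB (n : ℕ) : Polynomial ℝ :=
  2 * ∑ k ∈ Finset.range n, (-X) ^ (k + 1) * C (MB x m n k (x n))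
def PCp (n : ℕ) : Polynomial ℝ :=
  1 + ∑ k ∈ Finset.range n, (-X) ^ (k + 1) * C (MC x m n k (x n))

lemma PC_succ (n : ℕ) :
    PCp x m (n + 1) = PCp x m n + C (x (n + 1) - x n) * PB x m n
      + C ((x (n + 1) - x n) ^ 2 / 2) * PA x m n := by
  have hlast : MC x m (n + 1) n (x (n + 1)) = 0 := by rw [MC_succ, MC_top]
  have hterm : ∀ k, MC x m (n + 1) k (x (n + 1))
      = MC x m n k (x n) + (x (n + 1) - x n) * (2 * MB x m n k (x n))
        + ((x (n + 1) - x n) ^ 2 / 2) * (2 * MA x m n k) := by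
    intro k
    rw [MC_succ, MC_shift x m n k (x n) (x (n + 1))]
    ring
  have h2 : ((2 : Polynomial ℝ)) = C (2 : ℝ) := (map_ofNat C 2).symm
  have hsum : (∑ k ∈ Finset.range n, (-X : Polynomial ℝ) ^ (k + 1) * C (MC x m (n + 1) k (x (n + 1))))
      = (∑ k ∈ Finset.range n, (-X : Polynomial ℝ) ^ (k + 1) * C (MC x m n k (x n)))
        + (C (x (n + 1) - x n) * (2 * ∑ k ∈ Finset.range n, (-X) ^ (k + 1) * C (MB x m n k (x n)))
        + C ((x (n + 1) - x n) ^ 2 / 2) * (2 * ∑ k ∈ Finset.range n, (-X) ^ (k + 1) * C (MA x m n k))) := by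
    rw [h2, Finset.mul_sum, Finset.mul_sum, Finset.mul_sum, Finset.mul_sum,
      ← Finset.sum_add_distrib, ← Finset.sum_add_distrib]
    refine Finset.sum_congr rfl fun k _ => ?_
    rw [hterm k]
    simp only [map_add, _root_.map_mul]
    ring
  rw [PCp, PCp, PB, PA, Finset.sum_range_succ, hlast, map_zero, mul_zero, add_zero, hsum]
  ring

lemma PB_succ (n : ℕ) :
    PB x m (n + 1) = PB x m n + C (x (n + 1) - x n) * PA x m n := by
  have hlast : MB x m (n + 1) n (x (n + 1)) = 0 := by rw [MB_succ, MB_top]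
  have hterm : ∀ k, MB x m (n + 1) k (x (n + 1))
      = MB x m n k (x n) + (x (n + 1) - x n) * MA x m n k := by
    intro k
    rw [MB_succ, MB_shift x m n k (x n) (x (n + 1))]
  have hsum : (∑ k ∈ Finset.range n, (-X : Polynomial ℝ) ^ (k + 1) * C (MB x m (n + 1) k (x (n + 1))))
      = (∑ k ∈ Finset.range n, (-X : Polynomial ℝ) ^ (k + 1) * C (MB x m n k (x n)))
        + C (x (n + 1) - x n) * ∑ k ∈ Finset.range n, (-X) ^ (k + 1) * C (MA x m n k) := by
    rw [Finset.mul_sum, ← Finset.sum_add_distrib]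
    refine Finset.sum_congr rfl fun k _ => ?_
    rw [hterm k]
    simp only [map_add, _root_.map_mul]
    ring
  rw [PB, PB, PA, Finset.sum_range_succ, hlast, map_zero, mul_zero, add_zero, hsum]
  ring

lemma PC_succ_alt (n : ℕ) :
    PCp x m (n + 1)
      = 1 + ∑ k ∈ Finset.range n, (-X) ^ (k + 1) * C (MC x m n k (x (n + 1))) := by
  have hlast : MC x m (n + 1) n (x (n + 1)) = 0 := by rw [MC_succ, MC_top]
  rw [PCp, Finset.sum_range_succ, hlast, map_zero, mul_zero, add_zero]
  congr 1
  exact Finset.sum_congr rfl fun k _ => by rw [MC_succ]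

lemma PA_succ (n : ℕ) :
    PA x m (n + 1) = PA x m n + C (-2 * m (n + 1)) * X * PCp x m (n + 1) := by
  have key : (∑ k ∈ Finset.range (n + 1), (-X : Polynomial ℝ) ^ (k + 1) * C (MA x m (n + 1) k))
      = (∑ k ∈ Finset.range (n + 1), (-X : Polynomial ℝ) ^ (k + 1) * C (MA x m n k))
        + C (m (n + 1)) * ((-X) *
            (1 + ∑ k ∈ Finset.range n, (-X) ^ (k + 1) * C (MC x m n k (x (n + 1))))) := by
    rw [Finset.sum_range_succ' (fun k => (-X : Polynomial ℝ) ^ (k + 1) * C (MA x m (n + 1) k)) n,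
      Finset.sum_range_succ' (fun k => (-X : Polynomial ℝ) ^ (k + 1) * C (MA x m n k)) n]
    have hz : MA x m (n + 1) 0 = MA x m n 0 + m (n + 1) := MA_succ_zero x m n
    have hs : (∑ k ∈ Finset.range n, (-X : Polynomial ℝ) ^ (k + 1 + 1) * C (MA x m (n + 1) (k + 1)))
        = (∑ k ∈ Finset.range n, (-X : Polynomial ℝ) ^ (k + 1 + 1) * C (MA x m n (k + 1)))
          + C (m (n + 1)) * ((-X) * ∑ k ∈ Finset.range n, (-X) ^ (k + 1) * C (MC x m n k (x (n + 1)))) := by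
      rw [Finset.mul_sum, Finset.mul_sum, ← Finset.sum_add_distrib]
      refine Finset.sum_congr rfl fun k _ => ?_
      rw [MA_succ]
      simp only [map_add, _root_.map_mul]
      ring
    rw [hz, hs]
    simp only [map_add]
    ring
  rw [PA, PA, PC_succ_alt, key, Finset.sum_range_succ, MA_top, map_zero, mul_zero, add_zero,
    show (C (-2 * m (n + 1)) : Polynomial ℝ) = -2 * C (m (n + 1)) from by
      rw [_root_.map_mul, map_neg, map_ofNat]]
  ring

lemma incr_one : incr 1 1 = (Finset.univ : Finset (Fin 1 → Fin 1)) := by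
  ext σ
  simp only [mem_incr, Finset.mem_univ, iff_true]
  intro a b hab
  rw [Subsingleton.elim a b] at hab
  exact absurd hab (lt_irrefl b)

lemma MA_one : MA x m 1 0 = m 1 := by
  rw [MA, incr_one, Finset.univ_unique, Finset.sum_singleton, wA, Fin.prod_univ_one,
    Fin.prod_univ_zero, mul_one]
  rfl

lemma MB_one : MB x m 1 0 (x 1) = 0 := by
  rw [MB, incr_one, Finset.univ_unique, Finset.sum_singleton]
  have : (((default : Fin 1 → Fin 1) (Fin.last 0) : ℕ) + 1) = 1 := rfl
  rw [this, sub_self, mul_zero]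

lemma MC_one : MC x m 1 0 (x 1) = 0 := by
  rw [MC, incr_one, Finset.univ_unique, Finset.sum_singleton]
  have : (((default : Fin 1 → Fin 1) (Fin.last 0) : ℕ) + 1) = 1 := rfl
  rw [this, sub_self]
  ring

lemma mulVec_L (l : ℝ) (w : Fin 3 → Polynomial ℝ) :
    (Lmat l).mulVec w = ![w 0 + C l * w 1 + C (l ^ 2 / 2) * w 2, w 1 + C l * w 2, w 2] := by
  funext i
  fin_cases i <;>
    simp [Lmat, Matrix.mulVec, dotProduct, Fin.sum_univ_three]

lemma mulVec_G (a : ℝ) (w : Fin 3 → Polynomial ℝ) :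
    (Gmat a).mulVec w = ![w 0, w 1, C (-2 * a) * X * w 0 + w 2] := by
  funext i
  fin_cases i <;>
    simp [Gmat, Matrix.mulVec, dotProduct, Fin.sum_univ_three]

lemma key (n : ℕ) (hn : 1 ≤ n) :
    (transMat m (fun k => x (k + 1) - x k) n).mulVec ![1, 0, 0] 0 = PCp x m n ∧
    (transMat m (fun k => x (k + 1) - x k) n).mulVec ![1, 0, 0] 1 = PB x m n ∧
    (transMat m (fun k => x (k + 1) - x k) n).mulVec ![1, 0, 0] 2 = PA x m n := by
  induction n, hn using Nat.le_induction with
  | base =>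
    rw [show transMat m (fun k => x (k + 1) - x k) 1 = Gmat (m 1) from rfl, mulVec_G]
    refine ⟨?_, ?_, ?_⟩
    · show (1 : Polynomial ℝ) = PCp x m 1
      rw [PCp, Finset.sum_range_one, MC_one, map_zero, mul_zero, add_zero]
    · show (0 : Polynomial ℝ) = PB x m 1
      rw [PB, Finset.sum_range_one, MB_one, map_zero, mul_zero, mul_zero]
    · show C (-2 * m 1) * X * 1 + 0 = PA x m 1
      rw [PA, Finset.sum_range_one, MA_one, _root_.map_mul, map_neg, map_ofNat]
      ring
  | succ n hn ih =>
    obtain ⟨N, rfl⟩ : ∃ N, n = N + 1 := ⟨n - 1, by omega⟩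
    obtain ⟨h0, h1, h2⟩ := ih
    rw [show transMat m (fun k => x (k + 1) - x k) (N + 1 + 1)
        = Gmat (m (N + 1 + 1)) * Lmat (x (N + 1 + 1) - x (N + 1))
          * transMat m (fun k => x (k + 1) - x k) (N + 1) from rfl]
    rw [← Matrix.mulVec_mulVec, ← Matrix.mulVec_mulVec, mulVec_L, mulVec_G]
    set w := (transMat m (fun k => x (k + 1) - x k) (N + 1)).mulVec ![1, 0, 0] with hw
    refine ⟨?_, ?_, ?_⟩
    · show w 0 + C (x (N + 1 + 1) - x (N + 1)) * w 1
          + C ((x (N + 1 + 1) - x (N + 1)) ^ 2 / 2) * w 2 = PCp x m (N + 1 + 1)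
      rw [h0, h1, h2, PC_succ x m (N + 1)]
    · show w 1 + C (x (N + 1 + 1) - x (N + 1)) * w 2 = PB x m (N + 1 + 1)
      rw [h1, h2, PB_succ x m (N + 1)]
    · show C (-2 * m (N + 1 + 1)) * X
          * (w 0 + C (x (N + 1 + 1) - x (N + 1)) * w 1
            + C ((x (N + 1 + 1) - x (N + 1)) ^ 2 / 2) * w 2) + w 2 = PA x m (N + 1 + 1)
      rw [h0, h1, h2, PA_succ x m (N + 1), PC_succ x m (N + 1)]
      ring

end

theorem stmt2 (n : ℕ) (hn : 1 ≤ n) (x m : ℕ → ℝ)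
    (hx : ∀ i, 1 ≤ i → i < n → x i < x (i + 1)) :
    (transMat m (fun k => x (k + 1) - x k) n).mulVec ![1, 0, 0] 2
      = 2 * ∑ k ∈ Finset.range n, (-Polynomial.X) ^ (k + 1) *
          Polynomial.C (∑ σ ∈ Finset.univ.filter
              (fun σ : Fin (k + 1) → Fin n => ∀ a b : Fin (k + 1), a < b → σ a < σ b),
            (∏ j, m ((σ j : ℕ) + 1)) *
              ∏ j : Fin k, (x ((σ j.castSucc : ℕ) + 1) - x ((σ j.succ : ℕ) + 1)) ^ 2) := by
  rw [(key x m n hn).2.2]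
  rfl
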